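/- Let 0 < p_s < 1, 0 < p_t < 1, m ≥ 1 an integer and B_t ∈ ℝ, and define S(w) = Σ_{i=0}^{m−1} p_s^i (1 − (1−p_t)^{w_i}) for w ∈ ℝ^m with real exponents. If w* ∈ ℝ^m maximizes S over {w ∈ ℝ^m : Σ_{i=0}^{m−1} w_i = B_t}, then there exists μ > 0 such that p_s^i (1−p_t)^{w*_i} = μ for all i ∈ {0,…,m−1} (the equal-marginal Lagrange stationarity condition in the proof of Proposition 2). -/

import Mathlib

/-- Synergy objective of the spine tree (continuous relaxation, real exponents
interpreted via `a^w = exp (w * log a)`):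
`S(w) = ∑_{i=0}^{m-1} p_s^i (1 - (1-p_t)^{w_i})`. -/
noncomputable def synergyObj (ps pt : ℝ) (m : ℕ) (w : Fin m → ℝ) : ℝ :=
  ∑ i : Fin m, ps ^ (i : ℕ) * (1 - Real.exp (w i * Real.log (1 - pt)))

/-- Equal-marginal Lagrange stationarity: if `w*` maximizes the synergy objective over
the budget hyperplane `{w : ∑ᵢ wᵢ = B_t}`, then there is `μ > 0` with
`p_s^i (1-p_t)^{w*_i} = μ` for every `i`. -/
theorem equal_marginal_condition (ps pt : ℝ) (hps : ps ∈ Set.Ioo (0 : ℝ) 1)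
    (hpt : pt ∈ Set.Ioo (0 : ℝ) 1) (m : ℕ) (hm : 1 ≤ m) (Bt : ℝ)
    (wstar : Fin m → ℝ) (hfeas : (∑ i, wstar i) = Bt)
    (hmax : ∀ w : Fin m → ℝ, (∑ i, w i) = Bt →
      synergyObj ps pt m w ≤ synergyObj ps pt m wstar) :
    ∃ μ : ℝ, 0 < μ ∧
      ∀ i : Fin m, ps ^ (i : ℕ) * Real.exp (wstar i * Real.log (1 - pt)) = μ := by
  obtain ⟨hps0, hps1⟩ := hps
  obtain ⟨hpt0, hpt1⟩ := hpt
  set L := Real.log (1 - pt) with hLdef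
  have hL : L < 0 := Real.log_neg (by linarith) (by linarith)
  have key : ∀ i j : Fin m, i ≠ j →
      ps ^ (i : ℕ) * Real.exp (wstar i * L) = ps ^ (j : ℕ) * Real.exp (wstar j * L) := by
    intro i j hij
    set c : Fin m → ℝ := fun k => (if k = i then (1:ℝ) else 0) - (if k = j then 1 else 0)
      with hc
    set g : ℝ → ℝ := fun t => synergyObj ps pt m (fun k => wstar k + t * c k) with hg
    have hsum : ∀ t : ℝ, (∑ k, (wstar k + t * c k)) = Bt := by
      intro t
      rw [Finset.sum_add_distrib, hfeas]
      have : (∑ k, t * c k) = 0 := by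
        simp [hc, mul_sub, mul_ite, Finset.sum_sub_distrib, Finset.sum_ite_eq',
          mul_one, mul_zero]
      rw [this, add_zero]
    have hloc : IsLocalMax g 0 := by
      apply Filter.Eventually.of_forall
      intro t
      have h0 : g 0 = synergyObj ps pt m wstar := by simp [hg]
      rw [h0]
      exact hmax _ (hsum t)
    have hderiv : HasDerivAt g
        (∑ k : Fin m, ps ^ (k : ℕ) *
          (-(Real.exp ((wstar k + 0 * c k) * L) * (1 * c k * L)))) 0 := by
      have : g = fun t => ∑ k : Fin m, ps ^ (k : ℕ) *
          (1 - Real.exp ((wstar k + t * c k) * L)) := by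
        funext t; simp [hg, synergyObj, hLdef]
      rw [this]
      apply HasDerivAt.fun_sum
      intro k _
      have h1 : HasDerivAt (fun t : ℝ => wstar k + t * c k) (1 * c k) 0 :=
        ((hasDerivAt_id 0).mul_const (c k)).const_add (wstar k)
      exact (((h1.mul_const L).exp).const_sub 1).const_mul (ps ^ (k : ℕ))
    have hzero := hloc.deriv_eq_zero
    rw [hderiv.deriv] at hzero
    have hsimp : (∑ k : Fin m, ps ^ (k : ℕ) *
        (-(Real.exp ((wstar k + 0 * c k) * L) * (1 * c k * L))))
        = -L * (ps ^ (i : ℕ) * Real.exp (wstar i * L)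
              - ps ^ (j : ℕ) * Real.exp (wstar j * L)) := by
      have : ∀ k : Fin m, ps ^ (k : ℕ) *
          (-(Real.exp ((wstar k + 0 * c k) * L) * (1 * c k * L)))
          = (-L * (ps ^ (k : ℕ) * Real.exp (wstar k * L))) * c k := by
        intro k; ring_nf
      rw [Finset.sum_congr rfl fun k _ => this k]
      simp [hc, mul_sub, mul_ite, Finset.sum_sub_distrib, Finset.sum_ite_eq',
        mul_one, mul_zero]
    rw [hsimp] at hzero
    have hLne : -L ≠ 0 := by linarith
    have := mul_eq_zero.mp hzero
    rcases this with h | h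
    · exact absurd h hLne
    · linarith
  set i0 : Fin m := ⟨0, hm⟩
  refine ⟨ps ^ (i0 : ℕ) * Real.exp (wstar i0 * L), ?_, ?_⟩
  · positivity
  · intro i
    rcases eq_or_ne i i0 with rfl | h
    · rfl
    · exact key i i0 h
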